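/- Let A be a finite alphabet of size σ ≥ 5. There exists N such that for all n ≥ N, the expected length of the maximal unbordered factor of a uniformly random string of length n over A is at least 0.99·n, i.e. (1/σ^n) · Σ_{S ∈ A^n} b(S) ≥ 0.99·n. -/

import Mathlib

open List Finset Filter

/-- `S` is unbordered: it has no nonempty proper prefix that is also a suffix. -/
def Unbordered {α : Type*} (S : List α) : Prop :=
  ∀ B : List α, B ≠ [] → B.length < S.length → B <+: S → ¬ B <:+ S

/-- The length of the maximal unbordered factor of `S`. -/
noncomputable def muf {α : Type*} (S : List α) : ℕ :=
  sSup {k | ∃ F : List α, F <:+: S ∧ Unbordered F ∧ F.length = k}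

section Aux
variable {σ : ℕ}

def HB (L k : ℕ) (s : ℕ → Fin σ) : Prop := ∀ i < k, s i = s (L - k + i)

def Bord (L : ℕ) (s : ℕ → Fin σ) : Prop := ∃ k, 0 < k ∧ k < L ∧ HB L k s

instance (L k : ℕ) (s : ℕ → Fin σ) : Decidable (HB L k s) := by
  unfold HB; infer_instance

instance (L : ℕ) (s : ℕ → Fin σ) : Decidable (Bord L s) :=
  decidable_of_iff (∃ k < L, 0 < k ∧ HB L k s)
    ⟨fun ⟨k, h1, h2, h3⟩ => ⟨k, h2, h1, h3⟩, fun ⟨k, h1, h2, h3⟩ => ⟨k, h2, h1, h3⟩⟩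

lemma bord_congr {L : ℕ} {s s' : ℕ → Fin σ} (h : ∀ i < L, s i = s' i) :
    Bord L s → Bord L s' := by
  rintro ⟨k, hk0, hkL, hb⟩
  refine ⟨k, hk0, hkL, fun i hi => ?_⟩
  rw [← h i (by omega), ← h (L - k + i) (by omega)]
  exact hb i hi

def glue (hσ : 0 < σ) (m : ℕ) {t : ℕ} (w : Fin m → Fin σ) (u : Fin t → Fin σ) : ℕ → Fin σ :=
  fun i => if h : i < m then w ⟨i, h⟩ else if h2 : i - m < t then u ⟨i - m, h2⟩ else ⟨0, hσ⟩

def extf (hσ : 0 < σ) {n : ℕ} (f : Fin n → Fin σ) : ℕ → Fin σ :=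
  fun i => if h : i < n then f ⟨i, h⟩ else ⟨0, hσ⟩

lemma glue_lt (hσ : 0 < σ) {m t : ℕ} (w : Fin m → Fin σ) (u : Fin t → Fin σ) {i : ℕ} (h : i < m) :
    glue hσ m w u i = w ⟨i, h⟩ := dif_pos h

lemma glue_ge (hσ : 0 < σ) {m t : ℕ} (w : Fin m → Fin σ) (u : Fin t → Fin σ) {i : ℕ}
    (h : m ≤ i) (h2 : i - m < t) : glue hσ m w u i = u ⟨i - m, h2⟩ := by
  unfold glue
  rw [dif_neg (by omega), dif_pos h2]

lemma card_HB_le (hσ : 0 < σ) {m t : ℕ} (k : ℕ) (hkL : k < m + t) (w : Fin m → Fin σ) :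
    (univ.filter (fun u : Fin t → Fin σ => HB (m + t) k (glue hσ m w u))).card ≤ σ ^ (t - k) := by
  classical
  have hcard : ((univ : Finset (Fin (t - k) → Fin σ))).card = σ ^ (t - k) := by
    simp
  rw [← hcard]
  apply Finset.card_le_card_of_injOn
    (fun (u : Fin t → Fin σ) => fun i : Fin (t - k) => u ⟨i.1, by have := i.2; omega⟩)
    (fun _ _ => mem_univ _)
  intro u hu0 u' hu0' heq
  have hu := (Finset.mem_filter.1 hu0).2
  have hu' := (Finset.mem_filter.1 hu0').2
  funext j
  suffices H : ∀ jv, ∀ hjv : jv < t, u ⟨jv, hjv⟩ = u' ⟨jv, hjv⟩ by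
    exact H j.1 j.2
  intro jv
  induction jv using Nat.strong_induction_on with
  | _ jv ih =>
    intro hjv
    by_cases hcase : jv < t - k
    · exact congrFun heq ⟨jv, hcase⟩
    · have hik : jv + k - t < k := by omega
      have h1 := hu (jv + k - t) hik
      have h2 := hu' (jv + k - t) hik
      have hpos : m + t - k + (jv + k - t) = m + jv := by omega
      rw [hpos] at h1 h2
      have e1 : glue hσ m w u (m + jv) = u ⟨jv, hjv⟩ := by
        rw [glue_ge hσ w u (by omega) (by omega : m + jv - m < t)]
        congr 1
        simp only [Fin.mk.injEq]
        omega
      have e1' : glue hσ m w u' (m + jv) = u' ⟨jv, hjv⟩ := by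
        rw [glue_ge hσ w u' (by omega) (by omega : m + jv - m < t)]
        congr 1
        simp only [Fin.mk.injEq]
        omega
      rw [e1] at h1
      rw [e1'] at h2
      by_cases him : jv + k - t < m
      · rw [glue_lt hσ w u him] at h1
        rw [glue_lt hσ w u' him] at h2
        rw [← h1, ← h2]
      · have hlt : jv + k - t - m < t := by omega
        rw [glue_ge hσ w u (by omega) hlt] at h1
        rw [glue_ge hσ w u' (by omega) hlt] at h2
        have := ih (jv + k - t - m) (by omega) (by omega)
        rw [← h1, ← h2]
        exact this

lemma geomle4 (hσ5 : 5 ≤ σ) : ∀ t : ℕ, 4 * ∑ i ∈ Finset.range t, σ ^ i ≤ σ ^ t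
  | 0 => by simp
  | (t+1) => by
    rw [Finset.sum_range_succ, pow_succ]
    have h := geomle4 hσ5 t
    have hp : 0 < σ ^ t := pow_pos (by omega) t
    calc 4 * (∑ i ∈ Finset.range t, σ ^ i + σ ^ t)
        = 4 * ∑ i ∈ Finset.range t, σ ^ i + 4 * σ ^ t := by ring
      _ ≤ σ ^ t + 4 * σ ^ t := by omega
      _ = σ ^ t * 5 := by ring
      _ ≤ σ ^ t * σ := Nat.mul_le_mul_left _ hσ5

lemma card_bord_le (hσ5 : 5 ≤ σ) (hσ : 0 < σ) {m t : ℕ} (hm : 0 < m)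
    (h4 : 4 * (m + t) ≤ σ ^ t) (w : Fin m → Fin σ) :
    2 * (univ.filter (fun u : Fin t → Fin σ => Bord (m + t) (glue hσ m w u))).card ≤ σ ^ t := by
  classical
  have hsub : univ.filter (fun u : Fin t → Fin σ => Bord (m + t) (glue hσ m w u)) ⊆
      (Ioo 0 (m + t)).biUnion
        (fun k => univ.filter (fun u : Fin t → Fin σ => HB (m + t) k (glue hσ m w u))) := by
    intro u hu
    obtain ⟨k, hk0, hkL, hb⟩ := (Finset.mem_filter.1 hu).2
    exact Finset.mem_biUnion.2 ⟨k, Finset.mem_Ioo.2 ⟨hk0, hkL⟩,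
      Finset.mem_filter.2 ⟨mem_univ _, hb⟩⟩
  have h1 := Finset.card_le_card hsub
  have h2 := Finset.card_biUnion_le (s := Ioo 0 (m + t))
    (t := fun k => univ.filter (fun u : Fin t → Fin σ => HB (m + t) k (glue hσ m w u)))
  have h3 : ∑ k ∈ Ioo 0 (m + t),
      (univ.filter (fun u : Fin t → Fin σ => HB (m + t) k (glue hσ m w u))).card
      ≤ ∑ k ∈ Ioo 0 (m + t), σ ^ (t - k) :=
    Finset.sum_le_sum fun k hk => card_HB_le hσ k (Finset.mem_Ioo.1 hk).2 w
  have h5 : ∑ k ∈ Ioo 0 (m + t), σ ^ (t - k) ≤ (∑ i ∈ Finset.range t, σ ^ i) + m := by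
    have hsplit : Ioo 0 (m + t) ⊆ Ioc 0 t ∪ Ioo t (m + t) := by
      intro k hk
      simp only [Finset.mem_Ioo, Finset.mem_union, Finset.mem_Ioc] at *
      omega
    have hdisj : Disjoint (Ioc 0 t) (Ioo t (m + t)) := by
      rw [Finset.disjoint_left]
      intro k hk hk2
      simp only [Finset.mem_Ioo, Finset.mem_Ioc] at *
      omega
    calc ∑ k ∈ Ioo 0 (m + t), σ ^ (t - k)
        ≤ ∑ k ∈ Ioc 0 t ∪ Ioo t (m + t), σ ^ (t - k) :=
          Finset.sum_le_sum_of_subset hsplit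
      _ = ∑ k ∈ Ioc 0 t, σ ^ (t - k) + ∑ k ∈ Ioo t (m + t), σ ^ (t - k) :=
          Finset.sum_union hdisj
      _ ≤ (∑ i ∈ Finset.range t, σ ^ i) + m := by
          have e1 : ∑ k ∈ Ioc 0 t, σ ^ (t - k) = ∑ i ∈ Finset.range t, σ ^ i := by
            apply Finset.sum_nbij' (fun k => t - k) (fun i => t - i)
            · intro a ha
              simp only [Finset.mem_Ioc] at ha
              simp only [Finset.mem_range]
              omega
            · intro a ha
              simp only [Finset.mem_range] at ha
              simp only [Finset.mem_Ioc]
              omega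
            · intro a ha
              simp only [Finset.mem_Ioc] at ha
              omega
            · intro a ha
              simp only [Finset.mem_range] at ha
              omega
            · intro a ha
              rfl
          have e2 : ∑ k ∈ Ioo t (m + t), σ ^ (t - k) ≤ m := by
            calc ∑ k ∈ Ioo t (m + t), σ ^ (t - k)
                = ∑ k ∈ Ioo t (m + t), 1 := by
                  apply Finset.sum_congr rfl
                  intro k hk
                  simp only [Finset.mem_Ioo] at hk
                  rw [show t - k = 0 by omega, pow_zero]
              _ = (Ioo t (m + t)).card := by simp
              _ ≤ m := by rw [Nat.card_Ioo]; omega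
          omega
  have hg := geomle4 hσ5 t
  omega

lemma chain (hσ5 : 5 ≤ σ) (hσ : 0 < σ) (m0 t : ℕ) (hm0 : 0 < m0) :
    ∀ K n, n = m0 + K * t → 4 * n ≤ σ ^ t →
      ∀ s : Finset (Fin n → Fin σ),
        (∀ f, f ∈ s ↔ ∀ j ∈ Finset.Icc 1 K, Bord (m0 + j * t) (extf hσ f)) →
      2 ^ K * s.card ≤ σ ^ n := by
  intro K
  induction K with
  | zero =>
    intro n hn h4 s hs
    simp only [pow_zero, one_mul]
    refine le_trans (Finset.card_le_univ s) (le_of_eq ?_)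
    simp
  | succ K ih =>
    intro n hn h4 s hs
    classical
    rw [Nat.succ_mul] at hn
    set M := m0 + K * t with hM
    have hnM : n = M + t := by omega
    have hMn : M ≤ n := by omega
    set φ : (Fin n → Fin σ) → (Fin M → Fin σ) :=
      fun f i => f (Fin.cast hnM.symm (Fin.castAdd t i)) with hφ
    have hfiber : ∀ w ∈ s.image φ, 2 * (s.filter (fun f => φ f = w)).card ≤ σ ^ t := by
      intro w hw
      have hstep : (s.filter (fun f => φ f = w)).card ≤
          (univ.filter (fun u : Fin t → Fin σ => Bord (M + t) (glue hσ M w u))).card := by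
        apply Finset.card_le_card_of_injOn
          (fun (f : Fin n → Fin σ) => fun i : Fin t => f (Fin.cast hnM.symm (Fin.natAdd M i)))
        · intro f hf
          have hf1 := Finset.mem_filter.1 hf
          have hfs := hf1.1
          have hfw : φ f = w := hf1.2
          have hball := (hs f).1 hfs
          have hb : Bord (m0 + (K + 1) * t) (extf hσ f) := hball (K + 1) (Finset.mem_Icc.2 (by omega))
          have hrw : m0 + (K + 1) * t = M + t := by rw [Nat.succ_mul]; omega
          rw [hrw] at hb
          refine Finset.mem_filter.2 ⟨mem_univ _, ?_⟩
          refine bord_congr (fun i hi => ?_) hb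
          by_cases hiM : i < M
          · rw [glue_lt hσ _ _ hiM, ← hfw]
            exact dif_pos (by omega : i < n)
          · rw [glue_ge hσ _ _ (by omega) (by omega)]
            unfold extf
            rw [dif_pos (by omega : i < n)]
            show f _ = f _
            congr 1
            exact Fin.ext (by simp; omega)
        · intro f hf f' hf' heq
          have hfw : φ f = w := (Finset.mem_filter.1 hf).2
          have hfw' : φ f' = w := (Finset.mem_filter.1 hf').2
          funext i
          by_cases hiM : i.1 < M
          · exact congrFun (hfw.trans hfw'.symm) ⟨i.1, hiM⟩
          · have hlt : i.1 - M < t := by have := i.2; omega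
            have h2 := congrFun heq ⟨i.1 - M, hlt⟩
            simp only at h2
            convert h2 using 2
            · exact Fin.ext (by simp; omega)
            · exact Fin.ext (by simp; omega)
      have hbord := card_bord_le hσ5 hσ (t := t) (by omega : 0 < M) (by omega) w
      omega
    have hcount : s.card = ∑ w ∈ s.image φ, (s.filter (fun f => φ f = w)).card :=
      Finset.card_eq_sum_card_image φ s
    have h2s : 2 * s.card ≤ σ ^ t * (s.image φ).card := by
      rw [hcount, Finset.mul_sum]
      calc ∑ w ∈ s.image φ, 2 * (s.filter (fun f => φ f = w)).card
          ≤ ∑ _w ∈ s.image φ, σ ^ t := Finset.sum_le_sum hfiber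
        _ = σ ^ t * (s.image φ).card := by
            rw [Finset.sum_const, smul_eq_mul, mul_comm]
    have himage : s.image φ ⊆ univ.filter (fun w : Fin M → Fin σ =>
        ∀ j ∈ Finset.Icc 1 K, Bord (m0 + j * t) (extf hσ w)) := by
      intro w hw
      obtain ⟨f, hf, rfl⟩ := Finset.mem_image.1 hw
      have hball := (hs f).1 hf
      refine Finset.mem_filter.2 ⟨mem_univ _, fun j hj => ?_⟩
      have hjK := (Finset.mem_Icc.1 hj).2
      have hb := hball j (Finset.mem_Icc.2 ⟨(Finset.mem_Icc.1 hj).1, by omega⟩)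
      have hjM : m0 + j * t ≤ M := by
        have := Nat.mul_le_mul_right t hjK
        omega
      refine bord_congr (fun i hi => ?_) hb
      show extf hσ f i = extf hσ (φ f) i
      unfold extf
      rw [dif_pos (by omega : i < n), dif_pos (by omega : i < M)]
      rfl
    have hIH := ih M rfl (by omega)
      (univ.filter (fun w : Fin M → Fin σ =>
        ∀ j ∈ Finset.Icc 1 K, Bord (m0 + j * t) (extf hσ w)))
      (fun w => by simp only [Finset.mem_filter, Finset.mem_univ, true_and])
    calc 2 ^ (K + 1) * s.card = 2 ^ K * (2 * s.card) := by ring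
      _ ≤ 2 ^ K * (σ ^ t * (s.image φ).card) := Nat.mul_le_mul_left _ h2s
      _ = σ ^ t * (2 ^ K * (s.image φ).card) := by ring
      _ ≤ σ ^ t * (2 ^ K * (univ.filter (fun w : Fin M → Fin σ =>
            ∀ j ∈ Finset.Icc 1 K, Bord (m0 + j * t) (extf hσ w))).card) := by
          apply Nat.mul_le_mul_left
          exact Nat.mul_le_mul_left _ (Finset.card_le_card himage)
      _ ≤ σ ^ t * σ ^ M := Nat.mul_le_mul_left _ hIH
      _ = σ ^ M * σ ^ t := mul_comm _ _
      _ = σ ^ (M + t) := (pow_add σ M t).symm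
      _ = σ ^ n := by rw [hnM]

lemma muf_ge (hσ : 0 < σ) {n : ℕ} (f : Fin n → Fin σ) {L : ℕ} (hL : 0 < L) (hLn : L ≤ n)
    (h : ¬ Bord L (extf hσ f)) : L ≤ muf (List.ofFn f) := by
  have hlenofn : (List.ofFn f).length = n := List.length_ofFn
  have hlen : ((List.ofFn f).take L).length = L := by
    rw [List.length_take, hlenofn]
    omega
  refine le_csSup ⟨n, ?_⟩ ?_
  · rintro k ⟨F, hF, _, rfl⟩
    exact le_trans hF.length_le (le_of_eq hlenofn)
  · refine ⟨(List.ofFn f).take L, (List.take_prefix _ _).isInfix, ?_, hlen⟩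
    intro B hne hlt hpre hsuf
    apply h
    have hkpos : 0 < B.length := List.length_pos_iff.2 hne
    rw [hlen] at hlt
    refine ⟨B.length, hkpos, hlt, ?_⟩
    intro i hi
    have h1 : B = ((List.ofFn f).take L).take B.length :=
      List.prefix_iff_eq_take.1 hpre
    have h2 : B = ((List.ofFn f).take L).drop (L - B.length) := by
      have := List.suffix_iff_eq_drop.1 hsuf
      rwa [hlen] at this
    have heq : ((List.ofFn f).take L).take B.length
        = ((List.ofFn f).take L).drop (L - B.length) := by
      rw [← h1, ← h2]
    have hiL : i < L := by omega
    have hi2 : L - B.length + i < L := by omega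
    have hTlen : (((List.ofFn f).take L).take B.length).length = B.length := by
      rw [List.length_take, hlen]
      omega
    have hgl : (((List.ofFn f).take L).take B.length)[i]'(by omega)
        = (((List.ofFn f).take L).drop (L - B.length))[i]'(by
            rw [List.length_drop, hlen]; omega) := by
      exact List.getElem_of_eq heq _
    have e1 : (((List.ofFn f).take L).take B.length)[i]'(by omega) = extf hσ f i := by
      rw [List.getElem_take, List.getElem_take, List.getElem_ofFn]
      unfold extf
      rw [dif_pos (by omega : i < n)]
    have e2 : (((List.ofFn f).take L).drop (L - B.length))[i]'(by
          rw [List.length_drop, hlen]; omega) = extf hσ f (L - B.length + i) := by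
      rw [List.getElem_drop, List.getElem_take, List.getElem_ofFn]
      unfold extf
      rw [dif_pos (by omega : L - B.length + i < n)]
    rw [← e1, ← e2]
    exact hgl

end Aux

theorem expected_muf_ge_099 (σ : ℕ) (hσ : 5 ≤ σ) :
    ∃ N : ℕ, ∀ n : ℕ, N ≤ n →
      (1 / (σ : ℝ) ^ n) * ∑ f : Fin n → Fin σ, (muf (List.ofFn f) : ℝ) ≥ 0.99 * n := by
  refine ⟨1000000, fun n hn => ?_⟩
  have hσ0 : 0 < σ := by omega
  set t := n / 2000 + 1 with ht
  set m0 := n - 8 * t with hm0def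
  have h8t : 8 * t ≤ n := by omega
  have hm0pos : 0 < m0 := by omega
  have hnm : n = m0 + 8 * t := by omega
  have ht13 : 13 ≤ t := by omega
  have h4 : 4 * n ≤ σ ^ t := by
    have h1 : n < 2000 * t := by omega
    have h2 : t < 2 ^ t := Nat.lt_two_pow_self
    calc 4 * n ≤ 8000 * t := by omega
      _ ≤ 2 ^ 13 * 2 ^ t := Nat.mul_le_mul (by norm_num) (le_of_lt h2)
      _ = 2 ^ (13 + t) := (pow_add 2 13 t).symm
      _ ≤ 2 ^ (2 * t) := Nat.pow_le_pow_right (by norm_num) (by omega)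
      _ = 4 ^ t := by rw [pow_mul]; norm_num
      _ ≤ σ ^ t := Nat.pow_le_pow_left (by omega) t
  obtain ⟨Bad, hmemBad⟩ : ∃ B : Finset (Fin n → Fin σ), ∀ f : Fin n → Fin σ,
      f ∈ B ↔ ∀ j ∈ Finset.Icc 1 8, Bord (m0 + j * t) (extf hσ0 f) := by
    letI instB : DecidablePred
        (fun f : Fin n → Fin σ => ∀ j ∈ Finset.Icc 1 8, Bord (m0 + j * t) (extf hσ0 f)) :=
      fun _ => Finset.decidableDforallFinset
    refine ⟨@Finset.filter _ _ instB univ, fun f => ?_⟩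
    rw [Finset.mem_filter]
    simp only [Finset.mem_univ, true_and]
  have hchain : 2 ^ 8 * Bad.card ≤ σ ^ n :=
    chain hσ hσ0 m0 t hm0pos 8 n hnm h4 Bad hmemBad
  have hGood : ∀ f : Fin n → Fin σ, f ∉ Bad → (m0 + t : ℕ) ≤ muf (List.ofFn f) := by
    intro f hf
    have hnb : ¬ ∀ j ∈ Finset.Icc 1 8, Bord (m0 + j * t) (extf hσ0 f) := by
      intro hcon
      exact hf ((hmemBad f).2 hcon)
    push_neg at hnb
    obtain ⟨j, hj, hnbj⟩ := hnb
    have hj1 := (Finset.mem_Icc.1 hj).1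
    have hj8 := (Finset.mem_Icc.1 hj).2
    have hjt : j * t ≤ 8 * t := Nat.mul_le_mul_right t hj8
    have htjt : t ≤ j * t := Nat.le_mul_of_pos_left t (by omega)
    have hL := muf_ge hσ0 f (L := m0 + j * t) (by omega) (by omega) hnbj
    omega
  -- counting
  have hcard_univ : (univ : Finset (Fin n → Fin σ)).card = σ ^ n := by simp
  have hcompl : Badᶜ.card = σ ^ n - Bad.card := by
    have hcf : Fintype.card (Fin n → Fin σ) = σ ^ n := by simp
    rw [Finset.card_compl, hcf]
  have hBadn : Bad.card ≤ σ ^ n :=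
    le_trans (Nat.le_mul_of_pos_left _ (by norm_num : (0:ℕ) < 2 ^ 8)) hchain
  -- real arithmetic
  have hpow : (0 : ℝ) < (σ : ℝ) ^ n := by positivity
  have hBadR : 256 * (Bad.card : ℝ) ≤ (σ : ℝ) ^ n := by
    have : (2 : ℕ) ^ 8 * Bad.card ≤ σ ^ n := hchain
    exact_mod_cast this
  have hGoodR : ((255 : ℝ) / 256) * (σ : ℝ) ^ n ≤ (Badᶜ.card : ℝ) := by
    have : (Badᶜ.card : ℝ) = (σ : ℝ) ^ n - (Bad.card : ℝ) := by
      rw [hcompl]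
      push_cast [hBadn]
      ring
    rw [this]
    linarith
  have hsum : ((m0 + t : ℕ) : ℝ) * (Badᶜ.card : ℝ)
      ≤ ∑ f : Fin n → Fin σ, (muf (List.ofFn f) : ℝ) := by
    calc ((m0 + t : ℕ) : ℝ) * (Badᶜ.card : ℝ)
        = ∑ _f ∈ Badᶜ, ((m0 + t : ℕ) : ℝ) := by
          rw [Finset.sum_const, nsmul_eq_mul, mul_comm]
      _ ≤ ∑ f ∈ Badᶜ, (muf (List.ofFn f) : ℝ) := by
          apply Finset.sum_le_sum
          intro f hf
          exact_mod_cast hGood f (Finset.mem_compl.1 hf)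
      _ ≤ ∑ f ∈ univ, (muf (List.ofFn f) : ℝ) := by
          apply Finset.sum_le_sum_of_subset_of_nonneg (Finset.subset_univ _)
          intro f _ _
          positivity
  have htR : (t : ℝ) ≤ (n : ℝ) / 2000 + 1 := by
    have hdiv : ((n / 2000 : ℕ) : ℝ) ≤ (n : ℝ) / 2000 := Nat.cast_div_le
    rw [ht]
    push_cast
    linarith
  have hmtR : ((m0 + t : ℕ) : ℝ) = (n : ℝ) - 7 * t := by
    have : m0 + t = n - 7 * t := by omega
    rw [this]
    push_cast [show 7 * t ≤ n by omega]
    ring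
  have hnR : (1000000 : ℝ) ≤ (n : ℝ) := by exact_mod_cast hn
  have hkey : 0.99 * (n : ℝ) * (σ : ℝ) ^ n ≤ ∑ f : Fin n → Fin σ, (muf (List.ofFn f) : ℝ) := by
    have h1 : 0.99 * (n : ℝ) ≤ ((255 : ℝ) / 256) * ((n : ℝ) - 7 * t) := by
      nlinarith
    calc 0.99 * (n : ℝ) * (σ : ℝ) ^ n
        ≤ (((255 : ℝ) / 256) * ((n : ℝ) - 7 * t)) * (σ : ℝ) ^ n := by
          apply mul_le_mul_of_nonneg_right h1 (le_of_lt hpow)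
      _ = ((n : ℝ) - 7 * t) * (((255 : ℝ) / 256) * (σ : ℝ) ^ n) := by ring
      _ ≤ ((n : ℝ) - 7 * t) * (Badᶜ.card : ℝ) := by
          apply mul_le_mul_of_nonneg_left hGoodR
          nlinarith
      _ = ((m0 + t : ℕ) : ℝ) * (Badᶜ.card : ℝ) := by rw [hmtR]
      _ ≤ _ := hsum
  rw [ge_iff_le, one_div, inv_mul_eq_div, le_div_iff₀ hpow]
  exact hkey
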